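/- For n ≥ 2, the friendship graph F_n (n triangles sharing a common vertex) satisfies γ_st(F_n) = 1, and removing the central vertex yields n disjoint edges with γ_st(nK_2) = n; hence st_{γ_st}(F_n) = 1. -/

import Mathlib

open SimpleGraph

/-- `D` is a strong dominating set of `G`: every vertex outside `D` has a neighbor
in `D` whose degree is at least its own. -/
def IsStrongDominating {V : Type*} (G : SimpleGraph V) (D : Set V) : Prop :=
  ∀ v ∉ D, ∃ u ∈ D, G.Adj v u ∧ (G.neighborSet v).ncard ≤ (G.neighborSet u).ncard

/-- The strong domination number. -/
noncomputable def gammaSt {V : Type*} (G : SimpleGraph V) : ℕ :=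
  sInf {n | ∃ D : Set V, D.Finite ∧ IsStrongDominating G D ∧ D.ncard = n}

/-- The stability of the strong domination number: the minimum size of a vertex set
whose removal changes the strong domination number. -/
noncomputable def stGammaSt {V : Type*} (G : SimpleGraph V) : ℕ :=
  sInf {n | ∃ S : Set V, S.Finite ∧ S.ncard = n ∧ gammaSt (G.induce Sᶜ) ≠ gammaSt G}

/-- The join of two graphs. -/
def joinG {V W : Type*} (G : SimpleGraph V) (H : SimpleGraph W) : SimpleGraph (V ⊕ W) :=
  SimpleGraph.fromRel (fun x y =>
    match x, y with
    | Sum.inl a, Sum.inl b => G.Adj a b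
    | Sum.inr a, Sum.inr b => H.Adj a b
    | _, _ => True)

/-- `n` disjoint copies of `K₂`. -/
def nK2 (n : ℕ) : SimpleGraph (Fin n × Fin 2) where
  Adj x y := x.1 = y.1 ∧ x.2 ≠ y.2
  symm := ⟨fun x y h => ⟨h.1.symm, h.2.symm⟩⟩
  loopless := ⟨fun x h => h.2 rfl⟩

/- ### Auxiliary lemmas -/

lemma ncard_neighborSet_iso {V W : Type*} {G : SimpleGraph V} {H : SimpleGraph W}
    (e : G ≃g H) (v : V) : (G.neighborSet v).ncard = (H.neighborSet (e v)).ncard := by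
  rw [← Nat.card_coe_set_eq, ← Nat.card_coe_set_eq]
  exact Nat.card_congr (e.mapNeighborSet v)

lemma isStrongDominating_image {V W : Type*} {G : SimpleGraph V} {H : SimpleGraph W}
    (e : G ≃g H) {D : Set V} (hD : IsStrongDominating G D) :
    IsStrongDominating H (e '' D) := by
  intro w hw
  obtain ⟨u, hu, hadj, hcard⟩ := hD (e.symm w) (fun h => hw ⟨e.symm w, h, by simp⟩)
  refine ⟨e u, ⟨u, hu, rfl⟩, ?_, ?_⟩
  · have := e.map_adj_iff.2 hadj
    simpa using this
  · rw [ncard_neighborSet_iso e.symm w]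
    rw [ncard_neighborSet_iso e u] at hcard
    exact hcard

lemma gammaSt_set_subset {V W : Type*} {G : SimpleGraph V} {H : SimpleGraph W}
    (e : G ≃g H) :
    {n | ∃ D : Set V, D.Finite ∧ IsStrongDominating G D ∧ D.ncard = n} ⊆
    {n | ∃ D : Set W, D.Finite ∧ IsStrongDominating H D ∧ D.ncard = n} := by
  rintro m ⟨D, hfin, hdom, hcard⟩
  exact ⟨e '' D, hfin.image e, isStrongDominating_image e hdom,
    by rw [Set.ncard_image_of_injective D e.injective]; exact hcard⟩

lemma gammaSt_iso {V W : Type*} {G : SimpleGraph V} {H : SimpleGraph W}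
    (e : G ≃g H) : gammaSt G = gammaSt H := by
  unfold gammaSt
  congr 1
  exact le_antisymm (gammaSt_set_subset e) (gammaSt_set_subset e.symm)

lemma fin2_ne_iff : ∀ a b : Fin 2, a ≠ b ↔ b = 1 - a := by decide

lemma nK2_neighborSet (n : ℕ) (p : Fin n × Fin 2) :
    (nK2 n).neighborSet p = {(p.1, 1 - p.2)} := by
  ext q
  simp only [SimpleGraph.mem_neighborSet, Set.mem_singleton_iff]
  show (p.1 = q.1 ∧ p.2 ≠ q.2) ↔ _
  constructor
  · rintro ⟨h1, h2⟩
    exact Prod.ext h1.symm ((fin2_ne_iff _ _).1 h2)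
  · rintro rfl
    exact ⟨rfl, (fin2_ne_iff _ _).2 rfl⟩

lemma gammaSt_nK2 (n : ℕ) : gammaSt (nK2 n) = n := by
  classical
  have hmem : n ∈ {m | ∃ D : Set (Fin n × Fin 2), D.Finite ∧
      IsStrongDominating (nK2 n) D ∧ D.ncard = m} := by
    refine ⟨Set.range (fun i : Fin n => (i, (0 : Fin 2))), Set.finite_range _, ?_, ?_⟩
    · intro v hv
      have hv2 : v.2 ≠ 0 := by
        intro h
        exact hv ⟨v.1, by rw [← h]⟩
      refine ⟨(v.1, 0), ⟨v.1, rfl⟩, ⟨rfl, hv2⟩, ?_⟩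
      rw [nK2_neighborSet, nK2_neighborSet]
      simp
    · rw [← Nat.card_coe_set_eq,
        Nat.card_range_of_injective (fun a b h => by simpa using congrArg Prod.fst h)]
      simp
  have hlb : ∀ m ∈ {m | ∃ D : Set (Fin n × Fin 2), D.Finite ∧
      IsStrongDominating (nK2 n) D ∧ D.ncard = m}, n ≤ m := by
    rintro m ⟨D, hfin, hdom, rfl⟩
    set f : Fin n → Fin n × Fin 2 :=
      fun i => if (i, (0 : Fin 2)) ∈ D then (i, 0) else (i, 1) with hf
    have hfst : ∀ i, (f i).1 = i := by
      intro i; rw [hf]; dsimp only; split <;> rfl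
    have hfD : ∀ i, f i ∈ D := by
      intro i
      rw [hf]; dsimp only
      split
      · assumption
      · rename_i h
        obtain ⟨u, hu, ⟨h1, h2⟩, -⟩ := hdom (i, 0) h
        have hu2 : u.2 = 1 := by
          have : (0 : Fin 2) ≠ u.2 := h2
          revert this
          have : ∀ a : Fin 2, (0 : Fin 2) ≠ a → a = 1 := by decide
          exact this u.2
        have : u = (i, 1) := Prod.ext h1.symm hu2
        rwa [this] at hu
    have hinj : Function.Injective f := fun a b h => by
      rw [← hfst a, ← hfst b, h]
    calc n = Nat.card (Fin n) := by simp
      _ = Nat.card (Set.range f) := (Nat.card_range_of_injective hinj).symm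
      _ = (Set.range f).ncard := Nat.card_coe_set_eq _
      _ ≤ D.ncard := Set.ncard_le_ncard (Set.range_subset_iff.2 hfD) hfin
  exact le_antisymm (Nat.sInf_le hmem) (le_csInf ⟨n, hmem⟩ hlb)

/-- The equivalence between the non-central vertices of the friendship graph and
`Fin n × Fin 2`. -/
def friendshipEquiv (n : ℕ) :
    ({Sum.inl ()}ᶜ : Set (Unit ⊕ (Fin n × Fin 2))) ≃ (Fin n × Fin 2) where
  toFun := fun x => match x with
    | ⟨Sum.inl _, h⟩ => (h rfl).elim
    | ⟨Sum.inr p, _⟩ => p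
  invFun p := ⟨Sum.inr p, by simp⟩
  left_inv := fun x => match x with
    | ⟨Sum.inl _, h⟩ => (h rfl).elim
    | ⟨Sum.inr p, _⟩ => rfl
  right_inv p := rfl

/-- The induced subgraph of the friendship graph on the non-central vertices is
isomorphic to `n` disjoint edges. -/
def friendshipIso (n : ℕ) :
    (joinG (⊥ : SimpleGraph Unit) (nK2 n)).induce {Sum.inl ()}ᶜ ≃g nK2 n where
  toEquiv := friendshipEquiv n
  map_rel_iff' := by
    rintro ⟨(⟨⟩ | p), ha⟩ ⟨(⟨⟩ | q), hb⟩
    · exact (ha rfl).elim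
    · exact (ha rfl).elim
    · exact (hb rfl).elim
    · show (nK2 n).Adj p q ↔
        ((joinG (⊥ : SimpleGraph Unit) (nK2 n)).induce {Sum.inl ()}ᶜ).Adj ⟨Sum.inr p, ha⟩ ⟨Sum.inr q, hb⟩
      simp only [SimpleGraph.comap_adj, joinG, SimpleGraph.fromRel_adj]
      show (p.1 = q.1 ∧ p.2 ≠ q.2) ↔ Sum.inr p ≠ Sum.inr q ∧
        ((p.1 = q.1 ∧ p.2 ≠ q.2) ∨ (q.1 = p.1 ∧ q.2 ≠ p.2))
      constructor
      · rintro ⟨h1, h2⟩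
        refine ⟨?_, Or.inl ⟨h1, h2⟩⟩
        intro h
        exact h2 (congrArg Prod.snd (Sum.inr_injective h))
      · rintro ⟨-, (⟨h1, h2⟩ | ⟨h1, h2⟩)⟩
        · exact ⟨h1, h2⟩
        · exact ⟨h1.symm, fun h => h2 h.symm⟩

lemma friendship_nbhd_inr (n : ℕ) (p : Fin n × Fin 2) :
    (joinG (⊥ : SimpleGraph Unit) (nK2 n)).neighborSet (Sum.inr p) =
      {Sum.inl (), Sum.inr (p.1, 1 - p.2)} := by
  ext x
  simp only [SimpleGraph.mem_neighborSet, Set.mem_insert_iff, Set.mem_singleton_iff]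
  cases x with
  | inl a =>
    simp only [joinG, SimpleGraph.fromRel_adj]
    constructor
    · intro _; left; trivial
    · intro _
      exact ⟨by simp, Or.inl trivial⟩
  | inr q =>
    simp only [joinG, SimpleGraph.fromRel_adj]
    constructor
    · rintro ⟨hne, (⟨h1, h2⟩ | ⟨h1, h2⟩)⟩
      · right; exact congrArg Sum.inr (Prod.ext h1.symm ((fin2_ne_iff _ _).1 h2))
      · right
        refine congrArg Sum.inr (Prod.ext h1 ?_)
        exact (fin2_ne_iff _ _).1 (fun h => h2 h.symm)
    · rintro (h | h)
      · exact absurd h (by simp)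
      · have : q = (p.1, 1 - p.2) := Sum.inr_injective h
        subst this
        have hne2 : p.2 ≠ 1 - p.2 := (fin2_ne_iff _ _).2 rfl
        exact ⟨fun hh => hne2 (congrArg Prod.snd (Sum.inr_injective hh)),
          Or.inl ⟨rfl, hne2⟩⟩

lemma gammaSt_friendship (n : ℕ) (hn : 2 ≤ n) :
    gammaSt (joinG (⊥ : SimpleGraph Unit) (nK2 n)) = 1 := by
  set F := joinG (⊥ : SimpleGraph Unit) (nK2 n) with hF
  -- the center dominates everything
  have hcenter2 : 2 ≤ (F.neighborSet (Sum.inl ())).ncard := by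
    have hsub : ({Sum.inr ((⟨0, by omega⟩ : Fin n), 0), Sum.inr ((⟨0, by omega⟩ : Fin n), 1)} :
        Set (Unit ⊕ (Fin n × Fin 2))) ⊆ F.neighborSet (Sum.inl ()) := by
      have hadj : ∀ q : Fin n × Fin 2, F.Adj (Sum.inl ()) (Sum.inr q) := by
        intro q
        rw [hF]
        show (SimpleGraph.fromRel _).Adj _ _
        rw [SimpleGraph.fromRel_adj]
        exact ⟨by simp, Or.inl trivial⟩
      rintro x (rfl | rfl) <;> exact hadj _
    calc 2 = ({Sum.inr ((⟨0, by omega⟩ : Fin n), 0), Sum.inr ((⟨0, by omega⟩ : Fin n), 1)} :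
          Set (Unit ⊕ (Fin n × Fin 2))).ncard := by
          rw [Set.ncard_pair]
          intro h
          have := Sum.inr_injective h
          simp at this
      _ ≤ _ := Set.ncard_le_ncard hsub (Set.toFinite _)
  have hdom : IsStrongDominating F {Sum.inl ()} := by
    rintro (⟨⟩ | p) hv
    · exact absurd rfl hv
    · refine ⟨Sum.inl (), rfl, ?_, ?_⟩
      · rw [hF]
        show (SimpleGraph.fromRel _).Adj _ _
        rw [SimpleGraph.fromRel_adj]
        exact ⟨by simp, Or.inr trivial⟩
      · rw [friendship_nbhd_inr]
        rw [Set.ncard_pair (by simp)]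
        exact hcenter2
  have h1 : 1 ∈ {m | ∃ D : Set (Unit ⊕ (Fin n × Fin 2)), D.Finite ∧
      IsStrongDominating F D ∧ D.ncard = m} :=
    ⟨{Sum.inl ()}, Set.finite_singleton _, hdom, Set.ncard_singleton _⟩
  have h0 : 0 ∉ {m | ∃ D : Set (Unit ⊕ (Fin n × Fin 2)), D.Finite ∧
      IsStrongDominating F D ∧ D.ncard = m} := by
    rintro ⟨D, hfin, hdomD, hc⟩
    have hD : D = ∅ := (Set.ncard_eq_zero hfin).1 hc
    subst hD
    obtain ⟨u, hu, -⟩ := hdomD (Sum.inl ()) (Set.notMem_empty _)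
    exact hu
  have hle : gammaSt F ≤ 1 := Nat.sInf_le h1
  have hne : gammaSt F ≠ 0 := by
    intro h
    exact h0 (h ▸ Nat.sInf_mem ⟨1, h1⟩)
  omega

theorem stGammaSt_friendship_one (n : ℕ) (hn : 2 ≤ n) :
    gammaSt (joinG (⊥ : SimpleGraph Unit) (nK2 n)) = 1 ∧
    gammaSt ((joinG (⊥ : SimpleGraph Unit) (nK2 n)).induce {Sum.inl ()}ᶜ) = n ∧
    stGammaSt (joinG (⊥ : SimpleGraph Unit) (nK2 n)) = 1 := by
  have hG : gammaSt (joinG (⊥ : SimpleGraph Unit) (nK2 n)) = 1 := gammaSt_friendship n hn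
  have hInd : gammaSt ((joinG (⊥ : SimpleGraph Unit) (nK2 n)).induce {Sum.inl ()}ᶜ) = n :=
    (gammaSt_iso (friendshipIso n)).trans (gammaSt_nK2 n)
  refine ⟨hG, hInd, ?_⟩
  set F := joinG (⊥ : SimpleGraph Unit) (nK2 n) with hF
  have h1 : 1 ∈ {m | ∃ S : Set (Unit ⊕ (Fin n × Fin 2)), S.Finite ∧ S.ncard = m ∧
      gammaSt (F.induce Sᶜ) ≠ gammaSt F} := by
    refine ⟨{Sum.inl ()}, Set.finite_singleton _, Set.ncard_singleton _, ?_⟩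
    rw [hInd, hG]
    omega
  have h0 : 0 ∉ {m | ∃ S : Set (Unit ⊕ (Fin n × Fin 2)), S.Finite ∧ S.ncard = m ∧
      gammaSt (F.induce Sᶜ) ≠ gammaSt F} := by
    rintro ⟨S, hfin, hc, hne⟩
    have hS : S = ∅ := (Set.ncard_eq_zero hfin).1 hc
    subst hS
    rw [Set.compl_empty] at hne
    exact hne (gammaSt_iso (SimpleGraph.induceUnivIso F))
  have hle : stGammaSt F ≤ 1 := Nat.sInf_le h1
  have hne : stGammaSt F ≠ 0 := by
    intro h
    exact h0 (h ▸ Nat.sInf_mem ⟨1, h1⟩)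
  omega
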